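/- Assume Lusztig's conjectures P1–P15 hold for (W,S,L). Let J be Lusztig's asymptotic ring, the free abelian group on {t_x : x∈W} with product t_x · t_y = Σ_z γ_{xyz} t_{z⁻¹}, and for a left cell 𝔠 let J_ℂ^𝔠 = ⊕_{x∈𝔠} ℂ t_x, a left ideal of J_ℂ = ℂ⊗J. For two left cells 𝔠, 𝔠' and any x ∈ 𝔠⁻¹ ∩ 𝔠', the map φ_x defined by φ_x(t_y) = t_y t_x sends J_ℂ^𝔠 into J_ℂ^{𝔠'}, and as x ranges over 𝔠⁻¹ ∩ 𝔠' the maps φ_x are linearly independent; consequently dim Hom_{J_ℂ}(J_ℂ^𝔠, J_ℂ^{𝔠'}) ≥ |𝔠⁻¹ ∩ 𝔠'|. -/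

import Mathlib

open scoped Classical Pointwise

noncomputable section

/-! ### Generic Iwahori–Hecke algebras with unequal parameters, and Kazhdan–Lusztig cells -/

/-- The ring `𝒜 = ℤ[v, v⁻¹]` of Laurent polynomials. -/
abbrev 𝒜 : Type := LaurentPolynomial ℤ

/-- `v^k ∈ 𝒜`. -/
def vpow (k : ℤ) : 𝒜 := LaurentPolynomial.T k

/-- The coefficient of `v^k` in a Laurent polynomial. -/
def coeffL (q : 𝒜) (k : ℤ) : ℤ := (AddMonoidAlgebra.coeff q) k

/-- The support (set of exponents) of a Laurent polynomial. -/
def suppL (q : 𝒜) : Finset ℤ := (AddMonoidAlgebra.coeff q).support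

/-- Evaluation of a Laurent polynomial at `v = 1` (the sum of its coefficients). -/
def evalOne (q : 𝒜) : ℤ := (AddMonoidAlgebra.coeff q).sum (fun _ c => c)

/-- The word length of `x` with respect to a generating set `S`. -/
def lenOf {W : Type} [Group W] (S : Set W) (x : W) : ℕ :=
  sInf {k | ∃ l : List W, (∀ s ∈ l, s ∈ S) ∧ l.length = k ∧ l.prod = x}

/-- The data of a finite Coxeter system `(W, S)` together with a positive weight function
`L`, the associated generic Iwahori–Hecke algebra `H` over `𝒜 = ℤ[v,v⁻¹]` with its
standard basis `T` and Kazhdan–Lusztig basis `C` (the latter characterized by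
bar-invariance and triangularity with coefficients in `v⁻¹ℤ[v⁻¹]`). -/
structure KLData (W : Type) [Group W] [Fintype W] where
  /-- the set of simple reflections -/
  S : Set W
  gen : Subgroup.closure S = ⊤
  sq : ∀ s ∈ S, s * s = 1
  /-- the weight function (determined by its values on `S`) -/
  L : W → ℤ
  L_add : ∀ x y : W, lenOf S (x * y) = lenOf S x + lenOf S y → L (x * y) = L x + L y
  L_pos : ∀ s ∈ S, 0 < L s
  /-- the underlying module of the Hecke algebra -/
  H : Type
  [ringH : Ring H]
  [algH : Algebra 𝒜 H]
  /-- the standard basis `{T_x}` of `H` -/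
  T : Module.Basis W 𝒜 H
  T_one : T 1 = 1
  /-- the multiplication rule of the Hecke algebra -/
  Tmul : ∀ s ∈ S, ∀ x : W,
    (lenOf S (s * x) = lenOf S x + 1 → T s * T x = T (s * x)) ∧
    (lenOf S x = lenOf S (s * x) + 1 →
      T s * T x = T (s * x) + (vpow (L s) - vpow (-L s)) • T x)
  /-- the Kazhdan–Lusztig basis `{C_x}` of `H` -/
  C : Module.Basis W 𝒜 H
  /-- the bar involution of `H` -/
  bar : H →+* H
  bar_smul : ∀ (q : 𝒜) (m : H), bar (q • m) = (LaurentPolynomial.invert q) • bar m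
  bar_T : ∀ x : W, bar (T x) * T x⁻¹ = 1 ∧ T x⁻¹ * bar (T x) = 1
  C_bar : ∀ x : W, bar (C x) = C x
  C_diag : ∀ x : W, T.repr (C x) x = 1
  C_small : ∀ x y : W, y ≠ x → ∀ k ∈ suppL (T.repr (C x) y), k < 0

attribute [instance] KLData.ringH KLData.algH

namespace KLData

variable {W : Type} [Group W] [Fintype W] (K : KLData W)

/-- The structure constants `h_{x,y,z}` of `H`: `C_x C_y = Σ_z h_{x,y,z} C_z`. -/
def h (x y z : W) : 𝒜 := K.C.repr (K.C x * K.C y) z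

/-- The coefficients `p_{x,y}` defined by `C_y = Σ_x p_{x,y} T_x`. -/
def pC (x y : W) : 𝒜 := K.T.repr (K.C y) x

/-- One step of the left preorder: `y ⌯ x` if `C_y` occurs with nonzero coefficient in
`C_s C_x` for some `s ∈ S`. -/
def stepLeft (y x : W) : Prop := ∃ s ∈ K.S, K.h s x y ≠ 0

/-- The Kazhdan–Lusztig left preorder `≤_𝓛`, the transitive-reflexive closure of
`stepLeft`. -/
def leftLE (y x : W) : Prop := Relation.ReflTransGen K.stepLeft y x

/-- The right preorder `≤_𝓡`:  `y ≤_𝓡 x ↔ y⁻¹ ≤_𝓛 x⁻¹`. -/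
def rightLE (y x : W) : Prop := K.leftLE y⁻¹ x⁻¹

/-- The two-sided preorder `≤_𝓛𝓡`, generated by `≤_𝓛` and `≤_𝓡`. -/
def lrLE (y x : W) : Prop :=
  Relation.ReflTransGen (fun u w => K.stepLeft u w ∨ K.stepLeft u⁻¹ w⁻¹) y x

/-- Equivalence in the left preorder: `x ∼_𝓛 y`. -/
def sameLeftCell (x y : W) : Prop := K.leftLE x y ∧ K.leftLE y x

/-- Equivalence in the right preorder. -/
def sameRightCell (x y : W) : Prop := K.rightLE x y ∧ K.rightLE y x

/-- Equivalence in the two-sided preorder. -/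
def sameLRCell (x y : W) : Prop := K.lrLE x y ∧ K.lrLE y x

/-- The Kazhdan–Lusztig left cells: equivalence classes of `∼_𝓛`. -/
def IsLeftCell (c : Set W) : Prop := ∃ x : W, c = {y | K.sameLeftCell y x}

/-- Lusztig's function `a : W → ℕ`: `a(z)` is the smallest nonnegative integer with
`h_{x,y,z} ∈ v^{a(z)} ℤ[v⁻¹]` for all `x, y ∈ W`. -/
def aF (z : W) : ℕ := sInf {m : ℕ | ∀ x y : W, ∀ k ∈ suppL (K.h x y z), k ≤ (m : ℤ)}

/-- The leading coefficients `γ_{x,y,z}`: the constant term of `v^{-a(z⁻¹)} h_{x,y,z⁻¹}`. -/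
def γ (x y z : W) : ℤ := coeffL (K.h x y z⁻¹) (K.aF z⁻¹)

/-- `Δ(z)`, defined by `p_{1,z} = n_z v^{-Δ(z)} + (lower order terms)`. -/
def Δ (z : W) : ℤ := -(WithBot.unbotD 0 (suppL (K.pC 1 z)).max)

/-- The leading coefficient `n_z` of `p_{1,z}`. -/
def nF (z : W) : ℤ := coeffL (K.pC 1 z) (-(K.Δ z))

/-- The set `𝒟 = {z ∈ W | a(z) = Δ(z)}` of distinguished involutions. -/
def Dset : Set W := {z | (K.aF z : ℤ) = K.Δ z}

/-- The `a`-function of a parabolic subgroup `W_I`, computed in terms of `W_I`. -/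
def aFrel (I : Set W) (z : W) : ℕ :=
  sInf {m : ℕ | ∀ x ∈ Subgroup.closure I, ∀ y ∈ Subgroup.closure I,
    ∀ k ∈ suppL (K.h x y z), k ≤ (m : ℤ)}

/-- The matrix of the action of `w ∈ W` on the left cell module `[𝔠]` in the basis
`{e_y | y ∈ 𝔠}`, obtained by restriction of scalars at `v ↦ 1`:  `w` acts through `T_w`,
and `T_w C_y = Σ_z (C-repr) C_z`. -/
def cellMat (c : Set W) (w : W) : Matrix c c ℂ :=
  fun z y => (evalOne (K.C.repr (K.T w * K.C (y : W)) (z : W)) : ℂ)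

/-- The space `Hom_W([𝔠], [𝔠'])` of intertwining operators between two left cell
modules. -/
def intertwiners (c c' : Set W) : Submodule ℂ (Matrix c' c ℂ) where
  carrier := {f | ∀ w : W, K.cellMat c' w * f = f * K.cellMat c w}
  add_mem' := by
    intro a b ha hb w
    rw [Matrix.mul_add, ha w, hb w, Matrix.add_mul]
  zero_mem' := by intro w; simp
  smul_mem' := by
    intro q a ha w
    rw [Matrix.mul_smul, ha w, Matrix.smul_mul]

end KLData

/-! ### Lusztig's conjectures P1–P15 -/

/-- The two-variable Laurent polynomial ring `ℤ[v^{±1}, v'^{±1}]`. -/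
abbrev 𝒜₂ : Type := LaurentPolynomial 𝒜

/-- The inclusion `𝒜 → 𝒜₂` keeping the variable `v`. -/
def keepV : 𝒜 → 𝒜₂ := LaurentPolynomial.C

/-- The inclusion `𝒜 → 𝒜₂` substituting `v ↦ v'`. -/
def subV' (q : 𝒜) : 𝒜₂ :=
  (AddMonoidAlgebra.coeff q).sum
    (fun k c => (LaurentPolynomial.C (LaurentPolynomial.C c)) * LaurentPolynomial.T k)

/-- Lusztig's conjectures **P1–P15** for an unequal parameter Hecke algebra
(see [Lusztig, *Hecke algebras with unequal parameters*, §14]). -/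
structure LusztigProps {W : Type} [Group W] [Fintype W] (K : KLData W) : Prop where
  P1 : ∀ z : W, (K.aF z : ℤ) ≤ K.Δ z
  P2 : ∀ d ∈ K.Dset, ∀ x y : W, K.γ x y d ≠ 0 → x = y⁻¹
  P3 : ∀ y : W, ∃! d, d ∈ K.Dset ∧ K.γ y⁻¹ y d ≠ 0
  P4 : ∀ z' z : W, K.lrLE z' z → K.aF z ≤ K.aF z'
  P5 : ∀ d ∈ K.Dset, ∀ y : W, K.γ y⁻¹ y d ≠ 0 →
    K.γ y⁻¹ y d = K.nF d ∧ (K.nF d = 1 ∨ K.nF d = -1)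
  P6 : ∀ d ∈ K.Dset, d * d = 1
  P7 : ∀ x y z : W, K.γ x y z = K.γ y z x
  P8 : ∀ x y z : W, K.γ x y z ≠ 0 →
    K.sameLeftCell x y⁻¹ ∧ K.sameLeftCell y z⁻¹ ∧ K.sameLeftCell z x⁻¹
  P9 : ∀ z' z : W, K.leftLE z' z → K.aF z' = K.aF z → K.sameLeftCell z' z
  P10 : ∀ z' z : W, K.rightLE z' z → K.aF z' = K.aF z → K.sameRightCell z' z
  P11 : ∀ z' z : W, K.lrLE z' z → K.aF z' = K.aF z → K.sameLRCell z' z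
  P12 : ∀ I ⊆ K.S, ∀ y ∈ Subgroup.closure I, K.aFrel I y = K.aF y
  P13 : ∀ c : Set W, K.IsLeftCell c → ∃ d ∈ c, d ∈ K.Dset ∧
    (∀ d' ∈ c, d' ∈ K.Dset → d' = d) ∧ ∀ x ∈ c, K.γ x⁻¹ x d ≠ 0
  P14 : ∀ z : W, K.sameLRCell z z⁻¹
  P15 : ∀ w x x' y : W, K.aF w = K.aF y →
    ∑ y' : W, subV' (K.h w x' y') * keepV (K.h x y' y) =
      ∑ y' : W, keepV (K.h x w y') * subV' (K.h y' x' y)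

end

noncomputable section
open scoped Pointwise

namespace KLData

variable {W : Type} [Group W] [Fintype W] (K : KLData W)

/-- The multiplication of Lusztig's asymptotic ring `J_ℂ`, on the underlying space
`W → ℂ` with basis `{t_x}`:  `t_x · t_y = Σ_z γ_{x,y,z} t_{z⁻¹}`. -/
def Jmul (u w : W → ℂ) : W → ℂ :=
  fun t => ∑ x : W, ∑ y : W, u x * w y * (K.γ x y t⁻¹ : ℂ)

/-- The subspace `J_ℂ^𝔠 = ⊕_{x ∈ 𝔠} ℂ t_x` of `J_ℂ` attached to a left cell `𝔠`. -/
def Jc (_K : KLData W) (c : Set W) : Submodule ℂ (W → ℂ) where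
  carrier := {f | ∀ x ∉ c, f x = 0}
  add_mem' := by intro a b ha hb x hx; simp [ha x hx, hb x hx]
  zero_mem' := by intro x hx; rfl
  smul_mem' := by intro q a ha x hx; simp [ha x hx]

/-- Right multiplication `φ_x : f ↦ f · t_x` by the basis element `t_x` of `J_ℂ`,
as a linear endomorphism of `J_ℂ`. -/
def phi (x : W) : (W → ℂ) →ₗ[ℂ] (W → ℂ) where
  toFun f := K.Jmul f (Pi.single x 1)
  map_add' f g := by
    funext t
    simp [Jmul, add_mul, Finset.sum_add_distrib]
  map_smul' q f := by
    funext t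
    simp [Jmul, Finset.mul_sum, mul_assoc]

lemma Jmul_add₂ (u : W → ℂ) (f g : W → ℂ) :
    K.Jmul u (f + g) = K.Jmul u f + K.Jmul u g := by
  funext t
  simp [Jmul, mul_add, add_mul, Finset.sum_add_distrib]

lemma Jmul_zero₂ (u : W → ℂ) : K.Jmul u (0 : W → ℂ) = 0 := by
  funext t; simp [Jmul]

lemma Jmul_smul₂ (u : W → ℂ) (q : ℂ) (f : W → ℂ) :
    K.Jmul u (q • f) = q • K.Jmul u f := by
  funext t
  simp only [Jmul, Pi.smul_apply, smul_eq_mul, Finset.mul_sum]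
  refine Finset.sum_congr rfl fun x _ => Finset.sum_congr rfl fun y _ => by ring

/-- The space `Hom_{J_ℂ}(J_ℂ^𝔠, J_ℂ^{𝔠'})` of `J_ℂ`-module homomorphisms:  linear maps
`F : J_ℂ^𝔠 → J_ℂ` taking values in `J_ℂ^{𝔠'}` and commuting with the left `J_ℂ`-action
(recall that, granted **P8**, `J_ℂ^𝔠` is a left ideal of `J_ℂ`). -/
def HomJ (c c' : Set W) : Submodule ℂ (↥(K.Jc c) →ₗ[ℂ] (W → ℂ)) where
  carrier := {F | (∀ m : ↥(K.Jc c), F m ∈ K.Jc c') ∧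
    ∀ (u : W → ℂ) (m m' : ↥(K.Jc c)), (m' : W → ℂ) = K.Jmul u (m : W → ℂ) →
      F m' = K.Jmul u (F m)}
  add_mem' := by
    rintro F G ⟨hF1, hF2⟩ ⟨hG1, hG2⟩
    refine ⟨fun m => (K.Jc c').add_mem (hF1 m) (hG1 m), ?_⟩
    intro u m m' hm
    simp [hF2 u m m' hm, hG2 u m m' hm, K.Jmul_add₂]
  zero_mem' := by
    refine ⟨fun m => (K.Jc c').zero_mem, ?_⟩
    intro u m m' hm
    simp [K.Jmul_zero₂]
  smul_mem' := by
    rintro q F ⟨hF1, hF2⟩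
    refine ⟨fun m => (K.Jc c').smul_mem q (hF1 m), ?_⟩
    intro u m m' hm
    simp [hF2 u m m' hm, K.Jmul_smul₂]

end KLData



/-! ### Auxiliary lemmas -/

namespace KLData

variable {W : Type} [Group W] [Fintype W] (K : KLData W)

lemma sameLeftCell_refl (x : W) : K.sameLeftCell x x :=
  ⟨Relation.ReflTransGen.refl, Relation.ReflTransGen.refl⟩

lemma sameLeftCell_symm {x y : W} (h : K.sameLeftCell x y) : K.sameLeftCell y x := ⟨h.2, h.1⟩

lemma sameLeftCell_trans {x y z : W} (h : K.sameLeftCell x y) (h' : K.sameLeftCell y z) :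
    K.sameLeftCell x z := ⟨h.1.trans h'.1, h'.2.trans h.2⟩

lemma lrLE_of_leftLE {x y : W} (h : K.leftLE x y) : K.lrLE x y :=
  Relation.ReflTransGen.mono (fun _ _ hs => Or.inl hs) _ _ h

lemma aF_eq_of_sameLeftCell (hP : LusztigProps K) {x y : W} (h : K.sameLeftCell x y) :
    K.aF x = K.aF y :=
  le_antisymm (hP.P4 y x (K.lrLE_of_leftLE h.2)) (hP.P4 x y (K.lrLE_of_leftLE h.1))

lemma aF_inv (hP : LusztigProps K) (z : W) : K.aF z = K.aF z⁻¹ :=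
  le_antisymm (hP.P4 z⁻¹ z (hP.P14 z).2) (hP.P4 z z⁻¹ (hP.P14 z).1)

lemma h_deg_le (z : W) : ∀ x y : W, ∀ k ∈ suppL (K.h x y z), k ≤ (K.aF z : ℤ) := by
  classical
  have hne : {m : ℕ | ∀ x y : W, ∀ k ∈ suppL (K.h x y z), k ≤ (m : ℤ)}.Nonempty := by
    refine ⟨Finset.univ.sup (fun x : W => Finset.univ.sup
      (fun y : W => (suppL (K.h x y z)).sup Int.toNat)), fun x y k hk => ?_⟩
    have h1 : k.toNat ≤ (suppL (K.h x y z)).sup Int.toNat := Finset.le_sup hk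
    have h2 : (suppL (K.h x y z)).sup Int.toNat ≤
        Finset.univ.sup (fun y : W => (suppL (K.h x y z)).sup Int.toNat) :=
      Finset.le_sup (f := fun y : W => (suppL (K.h x y z)).sup Int.toNat)
        (Finset.mem_univ y)
    have h3 : Finset.univ.sup (fun y : W => (suppL (K.h x y z)).sup Int.toNat) ≤
        Finset.univ.sup (fun x : W => Finset.univ.sup
          (fun y : W => (suppL (K.h x y z)).sup Int.toNat)) :=
      Finset.le_sup (f := fun x : W => Finset.univ.sup
        (fun y : W => (suppL (K.h x y z)).sup Int.toNat)) (Finset.mem_univ x)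
    omega
  exact Nat.sInf_mem hne

lemma gamma_eq (x y u : W) : K.γ x y u⁻¹ = coeffL (K.h x y u) (K.aF u) := by
  simp only [γ, inv_inv]

lemma coeffL_eq_zero_of_gt {q : 𝒜} {k : ℤ} (h : ∀ j ∈ suppL q, j ≤ k) {n : ℤ} (hn : k < n) :
    coeffL q n = 0 := by
  by_contra hne
  exact absurd (h n (Finsupp.mem_support_iff.mpr hne)) (not_le.mpr hn)

end KLData

/-! ### Coefficients in `𝒜₂` -/

/-- The coefficient of `v'^k v^n` in an element of `𝒜₂`. -/
def coeff2 (q : 𝒜₂) (k n : ℤ) : ℤ := coeffL ((AddMonoidAlgebra.coeff q) k) n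

lemma coeff2_sum {ι : Type*} (s : Finset ι) (f : ι → 𝒜₂) (k n : ℤ) :
    coeff2 (∑ i ∈ s, f i) k n = ∑ i ∈ s, coeff2 (f i) k n := by
  unfold coeff2 coeffL
  rw [AddMonoidAlgebra.coeff_sum, Finset.sum_apply']
  rw [AddMonoidAlgebra.coeff_sum, Finset.sum_apply']

lemma coeffL_C_mul (c : ℤ) (r : 𝒜) (n : ℤ) :
    coeffL (LaurentPolynomial.C c * r) n = c * coeffL r n := by
  rw [← LaurentPolynomial.single_eq_C]
  exact AddMonoidAlgebra.coeff_single_mul_eq_mul_coeff n (fun m' _ => by simp)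

lemma coeff2_subV'_mul_keepV (p r : 𝒜) (k n : ℤ) :
    coeff2 (subV' p * keepV r) k n = coeffL p k * coeffL r n := by
  unfold subV' keepV
  rw [Finsupp.sum_mul]
  have hterm : ∀ (j : ℤ) (c : ℤ),
      (LaurentPolynomial.C (LaurentPolynomial.C c) * LaurentPolynomial.T j) *
        LaurentPolynomial.C r = AddMonoidAlgebra.single j (LaurentPolynomial.C c * r) := by
    intro j c
    rw [mul_right_comm, ← map_mul, ← LaurentPolynomial.single_eq_C_mul_T]
  simp only [hterm]
  unfold coeff2
  rw [AddMonoidAlgebra.coeff_finsuppSum]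
  simp only [AddMonoidAlgebra.coeff_single]
  rw [Finsupp.sum_apply]
  classical
  rw [Finsupp.sum]
  simp only [Finsupp.single_apply]
  rw [Finset.sum_ite_eq' p.coeff.support k
    (fun j => LaurentPolynomial.C (p.coeff j) * r)]
  by_cases hk : k ∈ p.coeff.support
  · rw [if_pos hk, coeffL_C_mul]; rfl
  · rw [if_neg hk]
    have : p.coeff k = 0 := Finsupp.notMem_support_iff.mp hk
    show coeffL (0 : 𝒜) n = coeffL p k * coeffL r n
    rw [show coeffL p k = 0 from this]
    simp [coeffL]



/-! ### Sum reshuffling helpers -/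

section SumComm

variable {α : Type} [Fintype α] {M : Type} [AddCommMonoid M]

lemma sum_rot3 (f : α → α → α → M) :
    ∑ x : α, ∑ a : α, ∑ b : α, f x a b = ∑ a : α, ∑ b : α, ∑ x : α, f x a b := by
  rw [Finset.sum_comm]
  exact Finset.sum_congr rfl fun a _ => Finset.sum_comm

lemma sum_rot4 (f : α → α → α → α → M) :
    ∑ x : α, ∑ y : α, ∑ a : α, ∑ b : α, f x y a b
      = ∑ y : α, ∑ a : α, ∑ b : α, ∑ x : α, f x y a b := by
  rw [Finset.sum_comm]
  exact Finset.sum_congr rfl fun y _ => sum_rot3 (fun x a b => f x y a b)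

lemma sum_comm4 (f : α → α → α → α → M) :
    ∑ x : α, ∑ y : α, ∑ a : α, ∑ b : α, f x y a b
      = ∑ a : α, ∑ b : α, ∑ y : α, ∑ x : α, f x y a b := by
  rw [sum_rot4 f, sum_rot4 (fun y a b x => f x y a b)]
  exact Finset.sum_congr rfl fun a _ => Finset.sum_congr rfl fun b _ => Finset.sum_comm

end SumComm

namespace KLData

variable {W : Type} [Group W] [Fintype W] (K : KLData W)

/-- Lusztig's 18.3-style associativity identity for the leading coefficients `γ`. -/
lemma gamma_assoc (hP : LusztigProps K) (a b y t : W) :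
    ∑ p : W, K.γ a b p⁻¹ * K.γ p y t⁻¹ = ∑ q : W, K.γ b y q⁻¹ * K.γ a q t⁻¹ := by
  by_cases hab : K.aF b = K.aF t
  · have h15 := hP.P15 b a y t hab
    have hco := congrArg (fun q : 𝒜₂ => coeff2 q (K.aF t) (K.aF t)) h15
    simp only [coeff2_sum] at hco
    have hL : ∀ p : W, coeff2 (subV' (K.h b y p) * keepV (K.h a p t)) (K.aF t) (K.aF t)
        = K.γ b y p⁻¹ * K.γ a p t⁻¹ := by
      intro p
      rw [coeff2_subV'_mul_keepV, ← K.gamma_eq a p t]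
      by_cases hz : K.γ a p t⁻¹ = 0
      · rw [hz, mul_zero, mul_zero]
      · have h8 := (hP.P8 a p t⁻¹ hz).2.1
        rw [inv_inv] at h8
        have hap : K.aF p = K.aF t := K.aF_eq_of_sameLeftCell hP h8
        rw [← hap, ← K.gamma_eq b y p]
    have hR : ∀ p : W, coeff2 (keepV (K.h a b p) * subV' (K.h p y t)) (K.aF t) (K.aF t)
        = K.γ p y t⁻¹ * K.γ a b p⁻¹ := by
      intro p
      rw [mul_comm, coeff2_subV'_mul_keepV, ← K.gamma_eq p y t]
      by_cases hz : K.γ p y t⁻¹ = 0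
      · rw [hz, zero_mul, zero_mul]
      · have h8 := (hP.P8 p y t⁻¹ hz).2.2
        have hap : K.aF p = K.aF t := by
          have e := K.aF_eq_of_sameLeftCell hP h8
          rw [← K.aF_inv hP t, ← K.aF_inv hP p] at e
          exact e.symm
        rw [← hap, ← K.gamma_eq a b p]
    calc ∑ p : W, K.γ a b p⁻¹ * K.γ p y t⁻¹
        = ∑ p : W, K.γ p y t⁻¹ * K.γ a b p⁻¹ :=
          Finset.sum_congr rfl fun p _ => mul_comm _ _
      _ = ∑ p : W, coeff2 (keepV (K.h a b p) * subV' (K.h p y t)) (K.aF t) (K.aF t) :=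
          Finset.sum_congr rfl fun p _ => (hR p).symm
      _ = ∑ p : W, coeff2 (subV' (K.h b y p) * keepV (K.h a p t)) (K.aF t) (K.aF t) := hco.symm
      _ = ∑ q : W, K.γ b y q⁻¹ * K.γ a q t⁻¹ := Finset.sum_congr rfl fun p _ => hL p
  · have hLz : ∀ p : W, K.γ a b p⁻¹ * K.γ p y t⁻¹ = 0 := by
      intro p
      by_contra hne
      have h1 : K.γ a b p⁻¹ ≠ 0 := fun h => hne (by rw [h, zero_mul])
      have h2 : K.γ p y t⁻¹ ≠ 0 := fun h => hne (by rw [h, mul_zero])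
      have c1 := (hP.P8 a b p⁻¹ h1).2.1
      rw [inv_inv] at c1
      have c2 := (hP.P8 p y t⁻¹ h2).2.2
      have e1 : K.aF b = K.aF p := K.aF_eq_of_sameLeftCell hP c1
      have e2 := K.aF_eq_of_sameLeftCell hP c2
      rw [← K.aF_inv hP t, ← K.aF_inv hP p] at e2
      exact hab (by omega)
    have hRz : ∀ q : W, K.γ b y q⁻¹ * K.γ a q t⁻¹ = 0 := by
      intro q
      by_contra hne
      have h1 : K.γ b y q⁻¹ ≠ 0 := fun h => hne (by rw [h, zero_mul])
      have h2 : K.γ a q t⁻¹ ≠ 0 := fun h => hne (by rw [h, mul_zero])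
      have c1 := (hP.P8 b y q⁻¹ h1).2.2
      have c2 := (hP.P8 a q t⁻¹ h2).2.1
      rw [inv_inv] at c2
      have e1 := K.aF_eq_of_sameLeftCell hP c1
      rw [← K.aF_inv hP q, ← K.aF_inv hP b] at e1
      have e2 : K.aF q = K.aF t := K.aF_eq_of_sameLeftCell hP c2
      exact hab (by omega)
    rw [Finset.sum_eq_zero (fun p _ => hLz p), Finset.sum_eq_zero (fun q _ => hRz q)]

/-- Associativity of the multiplication of `J_ℂ`. -/
lemma Jmul_assoc (hP : LusztigProps K) (u m w : W → ℂ) :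
    K.Jmul (K.Jmul u m) w = K.Jmul u (K.Jmul m w) := by
  funext t
  have key : ∀ a b yy : W,
      (∑ x : W, (K.γ a b x⁻¹ : ℂ) * (K.γ x yy t⁻¹ : ℂ))
        = ∑ x : W, (K.γ b yy x⁻¹ : ℂ) * (K.γ a x t⁻¹ : ℂ) := by
    intro a b yy
    exact_mod_cast K.gamma_assoc hP a b yy t
  have e1 : K.Jmul (K.Jmul u m) w t
      = ∑ a : W, ∑ b : W, ∑ y : W, u a * m b * w y *
          (∑ x : W, (K.γ a b x⁻¹ : ℂ) * (K.γ x y t⁻¹ : ℂ)) := by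
    simp only [Jmul, Finset.sum_mul, Finset.mul_sum]
    refine Eq.trans (sum_comm4 _) ?_
    exact Finset.sum_congr rfl fun a _ => Finset.sum_congr rfl fun b _ =>
      Finset.sum_congr rfl fun y _ => Finset.sum_congr rfl fun x _ => by ring
  have e2 : K.Jmul u (K.Jmul m w) t
      = ∑ a : W, ∑ b : W, ∑ y : W, u a * m b * w y *
          (∑ x : W, (K.γ b y x⁻¹ : ℂ) * (K.γ a x t⁻¹ : ℂ)) := by
    simp only [Jmul, Finset.sum_mul, Finset.mul_sum]
    refine Eq.trans (Finset.sum_congr rfl fun p _ => sum_rot3 _) ?_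
    exact Finset.sum_congr rfl fun a _ => Finset.sum_congr rfl fun b _ =>
      Finset.sum_congr rfl fun y _ => Finset.sum_congr rfl fun x _ => by ring
  rw [e1, e2]
  exact Finset.sum_congr rfl fun a _ => Finset.sum_congr rfl fun b _ =>
    Finset.sum_congr rfl fun y _ => by rw [key a b y]

lemma Jmul_apply (u w : W → ℂ) (t : W) :
    K.Jmul u w t = ∑ x : W, ∑ y : W, u x * w y * (K.γ x y t⁻¹ : ℂ) := rfl

lemma phi_apply (x : W) (f : W → ℂ) : K.phi x f = K.Jmul f (Pi.single x 1) := rfl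

lemma mem_Jc {c : Set W} {f : W → ℂ} : f ∈ K.Jc c ↔ ∀ x ∉ c, f x = 0 := Iff.rfl

end KLData


/-- **(Pietraho, proof of Lemma 3.3, after Lusztig.)**  Assume P1–P15.  For left cells
`𝔠, 𝔠'` and `x ∈ 𝔠⁻¹ ∩ 𝔠'`, the right multiplication `φ_x : t_y ↦ t_y t_x` maps
`J_ℂ^𝔠` into `J_ℂ^{𝔠'}`; as `x` ranges over `𝔠⁻¹ ∩ 𝔠'` the maps `φ_x` are linearly
independent; consequently `dim Hom_{J_ℂ}(J_ℂ^𝔠, J_ℂ^{𝔠'}) ≥ |𝔠⁻¹ ∩ 𝔠'|`. -/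
theorem phi_maps_and_linearIndependent_and_dim_ge
    {W : Type} [Group W] [Fintype W] (K : KLData W)
    (hP : LusztigProps K)
    (c c' : Set W) (hc : K.IsLeftCell c) (hc' : K.IsLeftCell c') :
    (∀ x ∈ c⁻¹ ∩ c', ∀ f ∈ K.Jc c, K.phi x f ∈ K.Jc c') ∧
    (LinearIndependent ℂ
      (fun x : ↥(c⁻¹ ∩ c') => (K.phi (x : W)).domRestrict (K.Jc c))) ∧
    (c⁻¹ ∩ c').ncard ≤ Module.finrank ℂ (K.HomJ c c') := by
  haveI : Fintype ↥(c⁻¹ ∩ c') := Fintype.ofFinite _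
  obtain ⟨x₀c, hcdef⟩ := hc
  obtain ⟨x₀c', hc'def⟩ := hc'
  have hmemc' : ∀ {x t : W}, x ∈ c' → K.sameLeftCell x t → t ∈ c' := by
    intro x t hx hxt
    rw [hc'def] at hx ⊢
    exact K.sameLeftCell_trans (K.sameLeftCell_symm hxt) hx
  -- Part 1
  have part1 : ∀ x ∈ c⁻¹ ∩ c', ∀ f ∈ K.Jc c, K.phi x f ∈ K.Jc c' := by
    intro x hx f _hf
    rw [K.mem_Jc]
    intro t ht
    rw [K.phi_apply, K.Jmul_apply]
    refine Finset.sum_eq_zero fun p _ => Finset.sum_eq_zero fun y _ => ?_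
    by_cases hyx : y = x
    · subst hyx
      have hγ : K.γ p y t⁻¹ = 0 := by
        by_contra hne
        have h8 := (hP.P8 p y t⁻¹ hne).2.1
        rw [inv_inv] at h8
        exact ht (hmemc' hx.2 h8)
      rw [hγ]; simp
    · rw [Pi.single_eq_of_ne hyx]; simp
  -- the distinguished involution of `c`
  obtain ⟨d, hdc, hdD, -, hdγ⟩ := hP.P13 c ⟨x₀c, hcdef⟩
  have hd1 : (Pi.single d 1 : W → ℂ) ∈ K.Jc c :=
    K.mem_Jc.mpr (fun z hz => Pi.single_eq_of_ne (fun hzd => hz (by rw [hzd]; exact hdc)) 1)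
  have hps : ∀ x x₀ : W, K.phi x (Pi.single d 1) x₀ = (K.γ d x x₀⁻¹ : ℂ) := by
    intro x x₀
    rw [K.phi_apply, K.Jmul_apply]
    rw [Finset.sum_eq_single d]
    · rw [Finset.sum_eq_single x]
      · simp
      · intro y _ hyx; rw [Pi.single_eq_of_ne hyx]; simp
      · intro hx; exact absurd (Finset.mem_univ x) hx
    · intro p _ hpd
      refine Finset.sum_eq_zero fun y _ => ?_
      rw [Pi.single_eq_of_ne hpd]; simp
    · intro hd; exact absurd (Finset.mem_univ d) hd
  have hγd : ∀ x₀ : W, x₀ ∈ c⁻¹ → K.γ d x₀ x₀⁻¹ ≠ 0 := by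
    intro x₀ hx₀
    rw [hP.P7 d x₀ x₀⁻¹]
    have := hdγ x₀⁻¹ (Set.mem_inv.mp hx₀)
    rwa [inv_inv] at this
  have hγoff : ∀ x x₀ : W, x ≠ x₀ → K.γ d x x₀⁻¹ = 0 := by
    intro x x₀ hne
    by_contra hγ
    rw [hP.P7 d x x₀⁻¹] at hγ
    have := hP.P2 d hdD x x₀⁻¹ hγ
    rw [inv_inv] at this
    exact hne this
  -- Part 2
  have part2 : LinearIndependent ℂ
      (fun x : ↥(c⁻¹ ∩ c') => (K.phi (x : W)).domRestrict (K.Jc c)) := by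
    refine Fintype.linearIndependent_iff.mpr (fun g hg x₀ => ?_)
    have happ := congrFun (congrArg
      (fun F : ↥(K.Jc c) →ₗ[ℂ] (W → ℂ) => F ⟨Pi.single d 1, hd1⟩) hg) (x₀ : W)
    simp only [LinearMap.coe_sum, Finset.sum_apply, LinearMap.smul_apply, Pi.smul_apply,
      LinearMap.domRestrict_apply, LinearMap.zero_apply, Pi.zero_apply, smul_eq_mul] at happ
    have hterm : ∀ x : ↥(c⁻¹ ∩ c'),
        g x * K.phi (x : W) (Pi.single d 1) (x₀ : W) = g x * (K.γ d x (x₀ : W)⁻¹ : ℂ) := by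
      intro x; rw [hps]
    rw [Finset.sum_congr rfl (fun x _ => hterm x)] at happ
    rw [Finset.sum_eq_single x₀] at happ
    · have hnz : (K.γ d (x₀ : W) (x₀ : W)⁻¹ : ℂ) ≠ 0 := by
        exact_mod_cast hγd (x₀ : W) x₀.2.1
      exact (mul_eq_zero.mp happ).resolve_right hnz
    · intro x _ hxne
      rw [hγoff (x : W) (x₀ : W) (fun h => hxne (Subtype.ext h))]
      simp
    · intro hd; exact absurd (Finset.mem_univ x₀) hd
  -- Part 3
  have hmem : ∀ x : ↥(c⁻¹ ∩ c'), (K.phi (x : W)).domRestrict (K.Jc c) ∈ K.HomJ c c' := by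
    intro x
    refine ⟨?_, ?_⟩
    · intro m
      exact part1 (x : W) x.2 (m : W → ℂ) m.2
    · intro u m m' hm
      rw [LinearMap.domRestrict_apply, LinearMap.domRestrict_apply, K.phi_apply, K.phi_apply,
        hm, K.Jmul_assoc hP]
  refine ⟨part1, part2, ?_⟩
  -- Part 3 via an injective linear map into `HomJ`
  let F : ↥(c⁻¹ ∩ c') → (↥(K.Jc c) →ₗ[ℂ] (W → ℂ)) :=
    fun x => (K.phi (x : W)).domRestrict (K.Jc c)
  let Φ₀ : (↥(c⁻¹ ∩ c') → ℂ) →ₗ[ℂ] (↥(K.Jc c) →ₗ[ℂ] (W → ℂ)) :=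
    { toFun := fun g => ∑ x, g x • F x
      map_add' := fun g₁ g₂ => by
        simp only [Pi.add_apply, add_smul, Finset.sum_add_distrib]
      map_smul' := fun a g => by
        simp only [Pi.smul_apply, smul_eq_mul, RingHom.id_apply, ← smul_smul, Finset.smul_sum] }
  have hΦmem : ∀ g, Φ₀ g ∈ K.HomJ c c' :=
    fun g => Submodule.sum_mem _ (fun x _ => Submodule.smul_mem _ _ (hmem x))
  let Φ : (↥(c⁻¹ ∩ c') → ℂ) →ₗ[ℂ] ↥(K.HomJ c c') :=
    Φ₀.codRestrict (K.HomJ c c') hΦmem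
  have hker : ∀ g, Φ g = 0 → g = 0 := by
    intro g hg
    have hg0 : Φ₀ g = 0 := congrArg Subtype.val hg
    exact funext (Fintype.linearIndependent_iff.mp part2 g hg0)
  have hinj : Function.Injective Φ :=
    fun a b hab => sub_eq_zero.mp (hker _ (by rw [map_sub, hab, sub_self]))
  have hfin : Module.finrank ℂ (↥(c⁻¹ ∩ c') → ℂ) ≤ Module.finrank ℂ ↥(K.HomJ c c') :=
    LinearMap.finrank_le_finrank_of_injective hinj
  rw [Module.finrank_pi] at hfin
  have hcard : (c⁻¹ ∩ c').ncard = Fintype.card ↥(c⁻¹ ∩ c') := by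
    rw [← Nat.card_coe_set_eq, Nat.card_eq_fintype_card]
  rw [hcard]
  exact hfin

end
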